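/- Let i > j ≥ 1 be integers and let F be a collection of i-element subsets of [n] such that every two distinct members of F intersect in exactly j elements. Then |F| ≤ 1 + (C(i,j) - 1)(i-j) + (n-i)/(i-j); in particular |F| ≤ (1+o(1)) n/(i-j) as n → ∞ with i, j fixed. -/
import Mathlib

private lemma choose_ge_self {i j : ℕ} (hj : 1 ≤ j) (hij : j < i) : i ≤ i.choose j := by
  induction i with
  | zero => omega
  | succ i ih =>
    obtain ⟨k, rfl⟩ : ∃ k, j = k + 1 := ⟨j - 1, by omega⟩
    rcases Nat.lt_or_ge (k+1) i with h2 | h2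
    · have h3 := ih h2
      have h4 : 1 ≤ i.choose k := Nat.choose_pos (by omega)
      rw [Nat.choose_succ_succ]
      simp only [Nat.succ_eq_add_one] at *
      omega
    · have hji : k + 1 = i := by omega
      subst hji
      rw [Nat.choose_succ_self_right]

theorem restricted_intersection_bound (i j n : ℕ) (hj : 1 ≤ j) (hij : j < i)
    (F : Finset (Finset (Fin n)))
    (hcard : ∀ A ∈ F, A.card = i)
    (hint : ∀ A ∈ F, ∀ B ∈ F, A ≠ B → (A ∩ B).card = j) :
    (F.card : ℝ) ≤ 1 + ((i.choose j : ℝ) - 1) * ((i : ℝ) - j)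
      + ((n : ℝ) - i) / ((i : ℝ) - j) := by
  classical
  have hd : (0:ℝ) < (i:ℝ) - j := by
    have : (j:ℝ) < i := by exact_mod_cast hij
    linarith
  have hC1 : 1 ≤ i.choose j := Nat.choose_pos (le_of_lt hij)
  have hC1' : (1:ℝ) ≤ (i.choose j : ℝ) := by exact_mod_cast hC1
  rcases F.eq_empty_or_nonempty with hF | ⟨A₀, hA₀⟩
  · subst hF
    simp only [Finset.card_empty, Nat.cast_zero]
    have hCi : (i:ℝ) ≤ (i.choose j : ℝ) := by exact_mod_cast choose_ge_self hj hij
    have h1 : (1:ℝ) ≤ (i:ℝ) - j := by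
      have : (j:ℝ) + 1 ≤ (i:ℝ) := by exact_mod_cast hij
      linarith
    have hn : (0:ℝ) ≤ (n:ℝ) := Nat.cast_nonneg n
    have hkey : -(1 + ((i.choose j : ℝ) - 1) * ((i:ℝ) - j)) ≤ ((n:ℝ) - i) / ((i:ℝ) - j) := by
      rw [le_div_iff₀ hd]
      have e0 : (0:ℝ) ≤ (i.choose j:ℝ) - 1 := by linarith
      have e2 : (1:ℝ) ≤ ((i:ℝ)-j)*((i:ℝ)-j) := by nlinarith
      have e3 : ((i:ℝ)-1) ≤ ((i.choose j:ℝ)-1)*(((i:ℝ)-j)*((i:ℝ)-j)) := by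
        calc (i:ℝ)-1 ≤ ((i.choose j:ℝ)-1) := by linarith
        _ = ((i.choose j:ℝ)-1)*1 := by ring
        _ ≤ _ := mul_le_mul_of_nonneg_left e2 e0
      nlinarith [e3, h1, hn]
    linarith
  · have hiA : A₀.card = i := hcard A₀ hA₀
    have hin : i ≤ n := by
      have h := Finset.card_le_card (Finset.subset_univ A₀)
      simpa [hiA] using h
    set T := Finset.powersetCard j A₀ with hT
    have hTcard : T.card = i.choose j := by
      rw [hT, Finset.card_powersetCard, hiA]
    set g : Finset (Fin n) → Finset (Finset (Fin n)) :=
      fun S => (F.erase A₀).filter (fun B => B ∩ A₀ = S) with hg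
    have hmemT : ∀ B ∈ F.erase A₀, B ∩ A₀ ∈ T := by
      intro B hB
      rw [Finset.mem_erase] at hB
      rw [hT, Finset.mem_powersetCard]
      exact ⟨Finset.inter_subset_right, hint B hB.2 A₀ hA₀ hB.1⟩
    have hsum : F.card = 1 + ∑ S ∈ T, (g S).card := by
      have h1 := Finset.card_eq_sum_card_fiberwise hmemT
      have h2 : (F.erase A₀).card + 1 = F.card := Finset.card_erase_add_one hA₀
      rw [← h2, h1, add_comm]
    have hgmem : ∀ S, ∀ B ∈ g S, B ∈ F ∧ B ≠ A₀ ∧ B ∩ A₀ = S := by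
      intro S B hB
      rw [hg, Finset.mem_filter, Finset.mem_erase] at hB
      exact ⟨hB.1.2, hB.1.1, hB.2⟩
    have hScard : ∀ S ∈ T, S.card = j := by
      intro S hS
      rw [hT, Finset.mem_powersetCard] at hS
      exact hS.2
    have hpetal : ∀ S, ∀ B ∈ g S, (B \ A₀).card = i - j := by
      intro S B hB
      obtain ⟨hBF, hBne, hBS⟩ := hgmem S B hB
      have h1 : (B \ A₀).card + (B ∩ A₀).card = B.card := Finset.card_sdiff_add_card_inter B A₀
      have h2 : (B ∩ A₀).card = j := hint B hBF A₀ hA₀ hBne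
      have h3 := hcard B hBF
      omega
    have hcore : ∀ S ∈ T, ∀ B ∈ g S, ∀ B' ∈ g S, B ≠ B' → B ∩ B' = S := by
      intro S hS B hB B' hB' hne
      obtain ⟨hBF, _, hBS⟩ := hgmem S B hB
      obtain ⟨hB'F, _, hB'S⟩ := hgmem S B' hB'
      have hsub : S ⊆ B ∩ B' := by
        intro x hx
        rw [Finset.mem_inter]
        constructor
        · rw [← hBS] at hx; exact (Finset.mem_inter.mp hx).1
        · rw [← hB'S] at hx; exact (Finset.mem_inter.mp hx).1
      have hcBB : (B ∩ B').card = j := hint B hBF B' hB'F hne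
      exact (Finset.eq_of_subset_of_card_le hsub (by rw [hcBB, hScard S hS])).symm
    have hdisj : ∀ S ∈ T, ∀ B ∈ g S, ∀ B' ∈ g S, B ≠ B' → Disjoint (B \ A₀) (B' \ A₀) := by
      intro S hS B hB B' hB' hne
      have hBB' := hcore S hS B hB B' hB' hne
      rw [Finset.disjoint_left]
      intro x hx hx'
      rw [Finset.mem_sdiff] at hx hx'
      have hxi : x ∈ B ∩ B' := Finset.mem_inter.mpr ⟨hx.1, hx'.1⟩
      rw [hBB'] at hxi
      obtain ⟨_, _, hBS⟩ := hgmem S B hB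
      rw [← hBS] at hxi
      exact hx.2 (Finset.mem_inter.mp hxi).2
    have hcount : ∀ S ∈ T, (g S).card * (i - j) ≤ n - i := by
      intro S hS
      have hbi : ((g S).biUnion (fun B => B \ A₀)).card = ∑ B ∈ g S, (B \ A₀).card :=
        Finset.card_biUnion (fun B hB B' hB' hne => hdisj S hS B hB B' hB' hne)
      have hsub : (g S).biUnion (fun B => B \ A₀) ⊆ Finset.univ \ A₀ := by
        intro x hx
        rw [Finset.mem_biUnion] at hx
        obtain ⟨B, hB, hxB⟩ := hx
        rw [Finset.mem_sdiff] at hxB ⊢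
        exact ⟨Finset.mem_univ x, hxB.2⟩
      have h1 : ((g S).biUnion (fun B => B \ A₀)).card ≤ n - i := by
        have h := Finset.card_le_card hsub
        rwa [Finset.card_sdiff_of_subset (Finset.subset_univ A₀), Finset.card_univ,
          Fintype.card_fin, hiA] at h
      have h2 : ∑ B ∈ g S, (B \ A₀).card = (g S).card * (i - j) := by
        rw [Finset.sum_congr rfl (fun B hB => hpetal S B hB), Finset.sum_const, smul_eq_mul]
      omega
    have hbig : ∀ S ∈ T, i - j + 1 ≤ (g S).card → ∀ S' ∈ T, S' ≠ S → (g S').card = 0 := by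
      intro S hS hSbig S' hS' hneSS
      rw [Finset.card_eq_zero]
      by_contra hne'
      obtain ⟨C, hC⟩ := Finset.nonempty_iff_ne_empty.mpr hne'
      obtain ⟨hCF, hCne, hCS'⟩ := hgmem S' C hC
      have hmeets : ∀ B ∈ g S, (C ∩ (B \ A₀)).Nonempty := by
        intro B hB
        obtain ⟨hBF, hBne, hBS⟩ := hgmem S B hB
        have hCB : C ≠ B := by
          intro h
          rw [h, hBS] at hCS'
          exact hneSS hCS'.symm
        have hj' : (C ∩ B).card = j := hint C hCF B hBF hCB
        by_contra hempty
        rw [Finset.not_nonempty_iff_eq_empty] at hempty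
        have hsubS : C ∩ B ⊆ S := by
          intro x hx
          rw [Finset.mem_inter] at hx
          have hxA : x ∈ A₀ := by
            by_contra hxA
            have hxm : x ∈ C ∩ (B \ A₀) :=
              Finset.mem_inter.mpr ⟨hx.1, Finset.mem_sdiff.mpr ⟨hx.2, hxA⟩⟩
            rw [hempty] at hxm
            exact absurd hxm (Finset.notMem_empty x)
          rw [← hBS]
          exact Finset.mem_inter.mpr ⟨hx.2, hxA⟩
        have hsubS' : C ∩ B ⊆ S' := by
          intro x hx
          have hxS := hsubS hx
          rw [Finset.mem_inter] at hx
          have hxA : x ∈ A₀ := by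
            rw [← hBS] at hxS
            exact (Finset.mem_inter.mp hxS).2
          rw [← hCS']
          exact Finset.mem_inter.mpr ⟨hx.1, hxA⟩
        have hCBS : C ∩ B = S :=
          Finset.eq_of_subset_of_card_le hsubS (by rw [hj', hScard S hS])
        have hSsubS' : S ⊆ S' := hCBS ▸ hsubS'
        have : S = S' :=
          Finset.eq_of_subset_of_card_le hSsubS' (by rw [hScard S hS, hScard S' hS'])
        exact hneSS this.symm
      have hbi2 : ((g S).biUnion (fun B => C ∩ (B \ A₀))).card
          = ∑ B ∈ g S, (C ∩ (B \ A₀)).card := by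
        apply Finset.card_biUnion
        intro B hB B' hB' hne
        exact Finset.disjoint_of_subset_left Finset.inter_subset_right
          (Finset.disjoint_of_subset_right Finset.inter_subset_right
            (hdisj S hS B hB B' hB' hne))
      have hsub2 : (g S).biUnion (fun B => C ∩ (B \ A₀)) ⊆ C \ A₀ := by
        intro x hx
        rw [Finset.mem_biUnion] at hx
        obtain ⟨B, hB, hxB⟩ := hx
        rw [Finset.mem_inter, Finset.mem_sdiff] at hxB
        exact Finset.mem_sdiff.mpr ⟨hxB.1, hxB.2.2⟩
      have hClow : (C \ A₀).card = i - j := by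
        have h1 : (C \ A₀).card + (C ∩ A₀).card = C.card := Finset.card_sdiff_add_card_inter C A₀
        have h2 : (C ∩ A₀).card = j := by rw [hCS']; exact hScard S' hS'
        have h3 := hcard C hCF
        omega
      have hlow : (g S).card ≤ ∑ B ∈ g S, (C ∩ (B \ A₀)).card := by
        calc (g S).card = ∑ _B ∈ g S, 1 := by simp
        _ ≤ _ := Finset.sum_le_sum (fun B hB => Finset.card_pos.mpr (hmeets B hB))
      have hhigh : ∑ B ∈ g S, (C ∩ (B \ A₀)).card ≤ i - j := by
        rw [← hbi2, ← hClow]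
        exact Finset.card_le_card hsub2
      omega
    -- final arithmetic
    have hTne : T.Nonempty := Finset.card_pos.mp (by rw [hTcard]; exact hC1)
    have hcastd : ((i - j : ℕ) : ℝ) = (i:ℝ) - j := by
      push_cast [Nat.cast_sub hij.le]; ring
    have hcastn : ((n - i : ℕ) : ℝ) = (n:ℝ) - i := by
      push_cast [Nat.cast_sub hin]; ring
    have hcountR : ∀ S ∈ T, ((g S).card : ℝ) ≤ ((n:ℝ) - i) / ((i:ℝ) - j) := by
      intro S hS
      rw [le_div_iff₀ hd]
      have h := hcount S hS
      calc ((g S).card : ℝ) * ((i:ℝ) - j) = (((g S).card * (i - j) : ℕ) : ℝ) := by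
            rw [Nat.cast_mul, hcastd]
      _ ≤ ((n - i : ℕ) : ℝ) := by exact_mod_cast h
      _ = (n:ℝ) - i := hcastn
    have hmain : ((∑ S ∈ T, (g S).card : ℕ) : ℝ)
        ≤ ((i.choose j : ℝ) - 1) * ((i:ℝ) - j) + ((n:ℝ) - i) / ((i:ℝ) - j) := by
      by_cases hcase : ∀ S ∈ T, (g S).card ≤ i - j
      · obtain ⟨S₀, hS₀⟩ := hTne
        have hsplit : ∑ S ∈ T, (g S).card = (g S₀).card + ∑ S ∈ T.erase S₀, (g S).card :=
          (Finset.add_sum_erase T _ hS₀).symm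
        have hrest : ∑ S ∈ T.erase S₀, (g S).card ≤ (i.choose j - 1) * (i - j) := by
          calc ∑ S ∈ T.erase S₀, (g S).card ≤ ∑ _S ∈ T.erase S₀, (i-j) :=
                Finset.sum_le_sum (fun S hS => hcase S (Finset.mem_of_mem_erase hS))
          _ = (T.card - 1) * (i - j) := by
                rw [Finset.sum_const, Finset.card_erase_of_mem hS₀, smul_eq_mul]
          _ = (i.choose j - 1) * (i - j) := by rw [hTcard]
        have hrestR : ((∑ S ∈ T.erase S₀, (g S).card : ℕ) : ℝ)
            ≤ ((i.choose j : ℝ) - 1) * ((i:ℝ) - j) := by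
          calc ((∑ S ∈ T.erase S₀, (g S).card : ℕ) : ℝ)
              ≤ (((i.choose j - 1) * (i - j) : ℕ) : ℝ) := by exact_mod_cast hrest
          _ = ((i.choose j : ℝ) - 1) * ((i:ℝ) - j) := by
              rw [Nat.cast_mul, hcastd, Nat.cast_sub hC1, Nat.cast_one]
        have hgR := hcountR S₀ hS₀
        rw [hsplit]
        push_cast
        push_cast at hrestR
        linarith
      · push_neg at hcase
        obtain ⟨S₁, hS₁, hS₁big⟩ := hcase
        have hS₁big' : i - j + 1 ≤ (g S₁).card := by omega
        have hzero := hbig S₁ hS₁ hS₁big'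
        have hsplit : ∑ S ∈ T, (g S).card = (g S₁).card + ∑ S ∈ T.erase S₁, (g S).card :=
          (Finset.add_sum_erase T _ hS₁).symm
        have hrest0 : ∑ S ∈ T.erase S₁, (g S).card = 0 := by
          apply Finset.sum_eq_zero
          intro S hS
          exact hzero S (Finset.mem_of_mem_erase hS) (Finset.ne_of_mem_erase hS)
        have hgR := hcountR S₁ hS₁
        have hpos : (0:ℝ) ≤ ((i.choose j : ℝ) - 1) * ((i:ℝ) - j) := by
          apply mul_nonneg <;> linarith
        rw [hsplit, hrest0]
        push_cast
        linarith
    have hsumR : (F.card : ℝ) = 1 + ((∑ S ∈ T, (g S).card : ℕ) : ℝ) := by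
      rw [hsum]; push_cast; ring
    rw [hsumR]
    linarith
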